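/- Let h:[0,∞)→(0,∞) satisfy h(y) ≥ c·y·log(y) for all y ≥ e, for some c>0, and let H(x) = ∫₀^x dy/h(y) with H diverging at infinity. Then for every t>0, H⁻¹(H(y)+t) ≥ y^{e^{ct}} for all sufficiently large y, and consequently lim_{y→∞} H⁻¹(H(y)+t)/y = +∞. -/

import Mathlib

open Real Filter

theorem osgood_inverse_growth
    (h : ℝ → ℝ) (hcont : Continuous h) (hmono : Monotone h)
    (hpos : ∀ x : ℝ, 0 ≤ x → 0 < h x)
    (c : ℝ) (hc : 0 < c)
    (hlog : ∀ y : ℝ, Real.exp 1 ≤ y → c * y * Real.log y ≤ h y)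
    (H : ℝ → ℝ) (hH : ∀ x : ℝ, H x = ∫ y in (0:ℝ)..x, 1 / h y)
    (hdiv : Tendsto H atTop atTop)
    (HInv : ℝ → ℝ)
    (hleft : ∀ x : ℝ, 0 ≤ x → HInv (H x) = x)
    (hright : ∀ z : ℝ, 0 ≤ z → H (HInv z) = z ∧ 0 ≤ HInv z) :
    ∀ t : ℝ, 0 < t →
      (∀ᶠ y in atTop, y ^ (Real.exp (c * t)) ≤ HInv (H y + t))
      ∧ Tendsto (fun y => HInv (H y + t) / y) atTop atTop := by
  intro t ht
  set p := Real.exp (c * t) with hp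
  have hp1 : 1 < p := by rw [hp]; exact Real.one_lt_exp_iff.mpr (mul_pos hc ht)
  -- integrability of 1/h on nonneg intervals
  have hint : ∀ a b : ℝ, 0 ≤ a → a ≤ b →
      IntervalIntegrable (fun y => 1 / h y) MeasureTheory.volume a b := by
    intro a b ha hab
    apply ContinuousOn.intervalIntegrable
    apply ContinuousOn.div continuousOn_const hcont.continuousOn
    intro x hx
    rw [Set.uIcc_of_le hab] at hx
    exact (hpos x (le_trans ha hx.1)).ne'
  have hHdiff : ∀ a b : ℝ, 0 ≤ a → a ≤ b → H b = H a + ∫ z in a..b, 1 / h z := by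
    intro a b ha hab
    rw [hH a, hH b,
      ← intervalIntegral.integral_add_adjacent_intervals (hint 0 a le_rfl ha) (hint a b ha hab)]
  -- H is order reflecting on [0,∞)
  have hHle : ∀ a b : ℝ, 0 ≤ a → 0 ≤ b → H a ≤ H b → a ≤ b := by
    intro a b ha hb hab
    by_contra hlt
    push_neg at hlt
    have hdiffeq := hHdiff b a hb hlt.le
    have hposint : 0 < ∫ z in b..a, 1 / h z := by
      have hconst : ∫ z in b..a, (1 / h a) = (a - b) * (1 / h a) := by
        rw [intervalIntegral.integral_const]; ring_nf
      have hmono' : (∫ z in b..a, (1 / h a)) ≤ ∫ z in b..a, 1 / h z := by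
        apply intervalIntegral.integral_mono_on hlt.le
          (intervalIntegrable_const) (hint b a hb hlt.le)
        intro z hz
        exact one_div_le_one_div_of_le (hpos z (le_trans hb hz.1)) (hmono hz.2)
      have : 0 < (a - b) * (1 / h a) :=
        mul_pos (sub_pos.mpr hlt) (one_div_pos.mpr (hpos a ha))
      linarith [hconst ▸ this, hmono']
    linarith
  have he1 : (1:ℝ) ≤ Real.exp 1 := by
    have := Real.add_one_le_exp (1:ℝ); linarith
  have key : ∀ y : ℝ, Real.exp 1 ≤ y → y ^ p ≤ HInv (H y + t) := by
    intro y hy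
    have hy1 : 1 ≤ y := le_trans he1 hy
    have hy0 : 0 < y := lt_of_lt_of_le one_pos hy1
    have hyp : y ≤ y ^ p := by
      calc y = y ^ (1:ℝ) := (Real.rpow_one y).symm
        _ ≤ y ^ p := Real.rpow_le_rpow_of_exponent_le hy1 hp1.le
    have hyp0 : 0 < y ^ p := Real.rpow_pos_of_pos hy0 p
    have hlogz : ∀ z ∈ Set.Icc y (y ^ p), 1 ≤ Real.log z := by
      intro z hz
      have hz0 : 0 < z := lt_of_lt_of_le hy0 hz.1
      exact (Real.le_log_iff_exp_le hz0).mpr (le_trans (by simpa using hy) hz.1)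
    have hlogy : 1 ≤ Real.log y := hlogz y ⟨le_rfl, hyp⟩
    -- FTC for z ↦ c⁻¹ * log (log z)
    have hderiv : ∀ z ∈ Set.uIcc y (y ^ p),
        HasDerivAt (fun w => c⁻¹ * Real.log (Real.log w)) ((c * z * Real.log z)⁻¹) z := by
      intro z hz
      rw [Set.uIcc_of_le hyp] at hz
      have hz1 : 1 ≤ Real.log z := hlogz z hz
      have hz0 : 0 < z := lt_of_lt_of_le hy0 hz.1
      have h1 : HasDerivAt Real.log z⁻¹ z := Real.hasDerivAt_log hz0.ne'
      have h2 : HasDerivAt (fun w => Real.log (Real.log w)) ((Real.log z)⁻¹ * z⁻¹) z :=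
        (Real.hasDerivAt_log (by linarith)).comp z h1
      have h3 := h2.const_mul c⁻¹
      convert h3 using 1
      have hlz : Real.log z ≠ 0 := by linarith
      · rfl
      · rfl
      ring
    have hcontg : ContinuousOn (fun z => (c * z * Real.log z)⁻¹) (Set.uIcc y (y ^ p)) := by
      rw [Set.uIcc_of_le hyp]
      apply ContinuousOn.inv₀
      · exact ((continuousOn_const.mul continuousOn_id).mul
          (Real.continuousOn_log.mono (by
            intro z hz
            simp only [Set.mem_compl_iff, Set.mem_singleton_iff]
            exact (lt_of_lt_of_le hy0 hz.1).ne')))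
      · intro z hz
        have hz1 : 1 ≤ Real.log z := hlogz z hz
        have hz0 : 0 < z := lt_of_lt_of_le hy0 hz.1
        have : 0 < c * z * Real.log z := by positivity
        exact this.ne'
    have hintg : IntervalIntegrable (fun z => (c * z * Real.log z)⁻¹)
        MeasureTheory.volume y (y ^ p) := hcontg.intervalIntegrable
    have hcalc : (∫ z in y..(y ^ p), (c * z * Real.log z)⁻¹) = t := by
      rw [intervalIntegral.integral_eq_sub_of_hasDerivAt hderiv hintg]
      have hly : Real.log (y ^ p) = p * Real.log y := Real.log_rpow hy0 p
      rw [hly, Real.log_mul (by positivity) (by linarith), hp, Real.log_exp]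
      field_simp
      ring
    have hmono_int : (∫ z in y..(y ^ p), 1 / h z) ≤ ∫ z in y..(y ^ p), (c * z * Real.log z)⁻¹ := by
      apply intervalIntegral.integral_mono_on hyp (hint y (y ^ p) hy0.le hyp) hintg
      intro z hz
      have hz1 : 1 ≤ Real.log z := hlogz z hz
      have hz0 : 0 < z := lt_of_lt_of_le hy0 hz.1
      have hez : Real.exp 1 ≤ z := le_trans hy hz.1
      have hposz : 0 < c * z * Real.log z := by positivity
      rw [one_div]
      exact inv_anti₀ hposz (hlog z hez)
    have hHle2 : H (y ^ p) ≤ H y + t := by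
      rw [hHdiff y (y ^ p) hy0.le hyp]
      linarith [hcalc ▸ hmono_int]
    have hHy0 : 0 ≤ H y := by
      rw [hH]
      apply intervalIntegral.integral_nonneg hy0.le
      intro z hz
      exact le_of_lt (one_div_pos.mpr (hpos z hz.1))
    obtain ⟨hr1, hr2⟩ := hright (H y + t) (by linarith)
    exact hHle (y ^ p) (HInv (H y + t)) hyp0.le hr2 (by rw [hr1]; exact hHle2)
  constructor
  · filter_upwards [eventually_ge_atTop (Real.exp 1)] with y hy using key y hy
  · apply tendsto_atTop_mono' atTop ?_ (tendsto_rpow_atTop (by linarith : (0:ℝ) < p - 1))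
    filter_upwards [eventually_ge_atTop (Real.exp 1), eventually_gt_atTop (0:ℝ)] with y hy hy0
    have hk := key y hy
    calc y ^ (p - 1) = y ^ p / y := by rw [Real.rpow_sub hy0, Real.rpow_one]
      _ ≤ HInv (H y + t) / y := by gcongr
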